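/- For every integer k ≥ 3, there exists a graph G_k of order k·(2^(k−1) − 1) with χ_NL(G_k) = k such that every finite simple graph H with no isolated vertices satisfying χ_NL(H) = k is isomorphic to a subgraph of G_k (that is, there is an injective map f : V(H) → V(G_k) such that whenever u and v are adjacent in H, f(u) and f(v) are adjacent in G_k). -/

import Mathlib

open SimpleGraph

/-- A coloring `c : V → Fin k` is a *neighbor-locating coloring* of `G` if it is proper and
any two distinct vertices with the same color have different sets of colors on their
open neighborhoods. -/
def IsNLColoring {V : Type*} (G : SimpleGraph V) {k : ℕ} (c : V → Fin k) : Prop :=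
  (∀ u v : V, G.Adj u v → c u ≠ c v) ∧
  ∀ u v : V, u ≠ v → c u = c v → c '' (G.neighborSet u) ≠ c '' (G.neighborSet v)

/-- The neighbor-locating chromatic number: the least `k` admitting an NL-coloring. -/
noncomputable def nlChromaticNumber {V : Type*} (G : SimpleGraph V) : ℕ :=
  sInf {k : ℕ | ∃ c : V → Fin k, IsNLColoring G c}

/-- The vertex type of the universal graph. -/
abbrev NLVert (k : ℕ) := {p : Fin k × Finset (Fin k) // p.2.Nonempty ∧ p.1 ∉ p.2}

/-- The universal graph. -/
def NLGraph (k : ℕ) : SimpleGraph (NLVert k) where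
  Adj p q := p.1.1 ∈ q.1.2 ∧ q.1.1 ∈ p.1.2
  symm := ⟨fun p q h => ⟨h.2, h.1⟩⟩
  loopless := ⟨fun p h => p.2.2 h.1⟩

lemma card_NLVert (k : ℕ) : Fintype.card (NLVert k) = k * (2 ^ (k - 1) - 1) := by
  have e : NLVert k ≃ Σ i : Fin k, {S : Finset (Fin k) // S.Nonempty ∧ i ∉ S} :=
    { toFun := fun p => ⟨p.1.1, p.1.2, p.2⟩
      invFun := fun x => ⟨(x.1, x.2.1), x.2.2⟩
      left_inv := fun p => rfl
      right_inv := fun x => rfl }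
  rw [Fintype.card_congr e, Fintype.card_sigma]
  have hcard : ∀ i : Fin k,
      Fintype.card {S : Finset (Fin k) // S.Nonempty ∧ i ∉ S} = 2 ^ (k - 1) - 1 := by
    intro i
    rw [Fintype.card_subtype]
    have hfe : (Finset.univ.filter (fun S : Finset (Fin k) => S.Nonempty ∧ i ∉ S)) =
        ((Finset.univ.erase i).powerset).erase ∅ := by
      ext S
      simp only [Finset.mem_filter, Finset.mem_univ, true_and, Finset.mem_erase,
        Finset.mem_powerset, Finset.subset_erase, Finset.nonempty_iff_ne_empty]
      constructor
      · rintro ⟨h1, h2⟩; exact ⟨h1, Finset.subset_univ S, h2⟩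
      · rintro ⟨h1, _, h2⟩; exact ⟨h1, h2⟩
    rw [hfe, Finset.card_erase_of_mem (Finset.empty_mem_powerset _), Finset.card_powerset,
        Finset.card_erase_of_mem (Finset.mem_univ i), Finset.card_univ, Fintype.card_fin]
  simp [hcard, Finset.sum_const, Finset.card_univ, mul_comm]

lemma nl_card_lt {m k : ℕ} (hk : 3 ≤ k) (hm : m < k) :
    m * (2 ^ (m - 1) - 1) < k * (2 ^ (k - 1) - 1) := by
  have h2 : (2:ℕ) ≤ 2 ^ (k - 2) := by
    calc (2:ℕ) = 2 ^ 1 := rfl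
    _ ≤ 2 ^ (k - 2) := Nat.pow_le_pow_right (by norm_num) (by omega)
  have h3 : 2 ^ (k - 2) < 2 ^ (k - 1) := Nat.pow_lt_pow_right (by norm_num) (by omega)
  calc m * (2 ^ (m - 1) - 1) ≤ (k - 1) * (2 ^ (k - 2) - 1) := by
        apply Nat.mul_le_mul (by omega)
        have : 2 ^ (m - 1) ≤ 2 ^ (k - 2) := Nat.pow_le_pow_right (by norm_num) (by omega)
        omega
    _ < k * (2 ^ (k - 2) - 1) := by
        exact (Nat.mul_lt_mul_right (by omega)).mpr (by omega)
    _ ≤ k * (2 ^ (k - 1) - 1) := Nat.mul_le_mul_left _ (by omega)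

/-- The canonical map of a graph with an NL-coloring into the universal vertex set. -/
noncomputable def nlMap {V : Type*} (G : SimpleGraph V)
    (hiso : ∀ v : V, (G.neighborSet v).Nonempty) {m : ℕ} (c : V → Fin m)
    (hc : IsNLColoring G c) (v : V) : NLVert m :=
  ⟨(c v, (Set.toFinite (c '' G.neighborSet v)).toFinset),
   by
     constructor
     · rw [Set.Finite.toFinset_nonempty]
       exact (hiso v).image c
     · intro h
       rw [Set.Finite.mem_toFinset] at h
       obtain ⟨u, hu, hcu⟩ := h
       exact hc.1 v u hu hcu.symm⟩

lemma nlMap_coe {V : Type*} (G : SimpleGraph V)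
    (hiso : ∀ v : V, (G.neighborSet v).Nonempty) {m : ℕ} (c : V → Fin m)
    (hc : IsNLColoring G c) (v : V) :
    ((nlMap G hiso c hc v).1.2 : Set (Fin m)) = c '' G.neighborSet v :=
  Set.Finite.coe_toFinset _

lemma nlMap_injective {V : Type*} (G : SimpleGraph V)
    (hiso : ∀ v : V, (G.neighborSet v).Nonempty) {m : ℕ} (c : V → Fin m)
    (hc : IsNLColoring G c) : Function.Injective (nlMap G hiso c hc) := by
  intro u v h
  by_contra hne
  have h1 : c u = c v := congrArg (fun p => p.1.1) h
  have h2 : ((nlMap G hiso c hc u).1.2 : Set (Fin m)) = ((nlMap G hiso c hc v).1.2 : Set (Fin m)) := by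
    rw [h]
  rw [nlMap_coe, nlMap_coe] at h2
  exact hc.2 u v hne h1 h2

lemma nlMap_adj {V : Type*} (G : SimpleGraph V)
    (hiso : ∀ v : V, (G.neighborSet v).Nonempty) {m : ℕ} (c : V → Fin m)
    (hc : IsNLColoring G c) {u v : V} (h : G.Adj u v) :
    (NLGraph m).Adj (nlMap G hiso c hc u) (nlMap G hiso c hc v) := by
  constructor
  · show c u ∈ (Set.toFinite (c '' G.neighborSet v)).toFinset
    rw [Set.Finite.mem_toFinset]
    exact ⟨u, h.symm, rfl⟩
  · show c v ∈ (Set.toFinite (c '' G.neighborSet u)).toFinset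
    rw [Set.Finite.mem_toFinset]
    exact ⟨v, h, rfl⟩

lemma card_le_of_NLColoring {V : Type*} [Fintype V] (G : SimpleGraph V)
    (hiso : ∀ v : V, (G.neighborSet v).Nonempty) {m : ℕ} (c : V → Fin m)
    (hc : IsNLColoring G c) : Fintype.card V ≤ m * (2 ^ (m - 1) - 1) := by
  rw [← card_NLVert m]
  exact Fintype.card_le_of_injective _ (nlMap_injective G hiso c hc)

lemma NLGraph_image {k : ℕ} (p : NLVert k) :
    (fun q : NLVert k => q.1.1) '' (NLGraph k).neighborSet p = (p.1.2 : Set (Fin k)) := by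
  ext j
  constructor
  · rintro ⟨q, hq, rfl⟩
    exact hq.2
  · intro hj
    have hjne : j ≠ p.1.1 := fun h => p.2.2 (h ▸ hj)
    refine ⟨⟨(j, {p.1.1}), Finset.singleton_nonempty _, by simpa using hjne⟩,
      ⟨by simp, hj⟩, rfl⟩

lemma NLGraph_no_isolated {k : ℕ} (p : NLVert k) : ((NLGraph k).neighborSet p).Nonempty := by
  obtain ⟨j, hj⟩ := p.2.1
  have hjne : j ≠ p.1.1 := fun h => p.2.2 (h ▸ hj)
  exact ⟨⟨(j, {p.1.1}), Finset.singleton_nonempty _, by simpa using hjne⟩, by simp, hj⟩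

theorem exists_universal_graph_for_nlChromaticNumber (k : ℕ) (hk : 3 ≤ k) :
    ∃ Gk : SimpleGraph (Fin (k * (2 ^ (k - 1) - 1))),
      nlChromaticNumber Gk = k ∧
      ∀ (W : Type) [Fintype W] (H : SimpleGraph W),
        (∀ v : W, (H.neighborSet v).Nonempty) → nlChromaticNumber H = k →
        ∃ f : W → Fin (k * (2 ^ (k - 1) - 1)),
          Function.Injective f ∧ ∀ u v : W, H.Adj u v → Gk.Adj (f u) (f v) := by
  set n := k * (2 ^ (k - 1) - 1) with hn
  have e : NLVert k ≃ Fin n := Fintype.equivFinOfCardEq (card_NLVert k)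
  set Gk : SimpleGraph (Fin n) := (NLGraph k).comap e.symm with hGk
  have hadj : ∀ a b : Fin n, Gk.Adj a b ↔ (NLGraph k).Adj (e.symm a) (e.symm b) :=
    fun a b => Iff.rfl
  have hGkiso : ∀ a : Fin n, (Gk.neighborSet a).Nonempty := by
    intro a
    obtain ⟨q, hq⟩ := NLGraph_no_isolated (e.symm a)
    refine ⟨e q, ?_⟩
    show (NLGraph k).Adj (e.symm a) (e.symm (e q))
    simpa using hq
  -- the coloring of Gk
  set c0 : Fin n → Fin k := fun a => (e.symm a).1.1 with hc0
  have himage : ∀ a : Fin n, c0 '' Gk.neighborSet a = ((e.symm a).1.2 : Set (Fin k)) := by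
    intro a
    rw [← NLGraph_image (e.symm a)]
    ext j
    constructor
    · rintro ⟨b, hb, rfl⟩
      exact ⟨e.symm b, hb, rfl⟩
    · rintro ⟨q, hq, rfl⟩
      refine ⟨e q, ?_, by simp [hc0]⟩
      show (NLGraph k).Adj (e.symm a) (e.symm (e q))
      simpa using hq
  have hc0NL : IsNLColoring Gk c0 := by
    constructor
    · intro a b hab h
      have h1 : (e.symm a).1.1 ∈ (e.symm b).1.2 := hab.1
      have h2 : (e.symm a).1.1 = (e.symm b).1.1 := h
      rw [h2] at h1
      exact (e.symm b).2.2 h1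
    · intro a b hne hcc
      rw [himage, himage]
      intro hSS
      have hS : (e.symm a).1.2 = (e.symm b).1.2 := Finset.coe_injective hSS
      apply hne
      have : e.symm a = e.symm b := Subtype.ext (Prod.ext hcc hS)
      exact e.symm.injective this
  refine ⟨Gk, ?_, ?_⟩
  · -- nlChromaticNumber Gk = k
    apply le_antisymm
    · exact Nat.sInf_le ⟨c0, hc0NL⟩
    · have hnonempty : {m : ℕ | ∃ c : Fin n → Fin m, IsNLColoring Gk c}.Nonempty :=
        ⟨k, c0, hc0NL⟩
      apply le_csInf hnonempty
      rintro m ⟨c, hc⟩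
      by_contra hlt
      push_neg at hlt
      have h1 := card_le_of_NLColoring Gk hGkiso c hc
      rw [Fintype.card_fin] at h1
      have h2 := nl_card_lt hk hlt
      omega
  · intro W _ H hiso hnl
    have hne : {m : ℕ | ∃ c : W → Fin m, IsNLColoring H c}.Nonempty := by
      by_contra h
      rw [Set.not_nonempty_iff_eq_empty] at h
      rw [nlChromaticNumber, h, Nat.sInf_empty] at hnl
      omega
    have hmem := Nat.sInf_mem hne
    rw [show sInf {m : ℕ | ∃ c : W → Fin m, IsNLColoring H c} = nlChromaticNumber H from rfl,
      hnl] at hmem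
    obtain ⟨c, hc⟩ := hmem
    refine ⟨fun w => e (nlMap H hiso c hc w),
      e.injective.comp (nlMap_injective H hiso c hc), ?_⟩
    intro u v huv
    have hadj2 := nlMap_adj H hiso c hc huv
    simp only [hGk, SimpleGraph.comap_adj, Equiv.symm_apply_apply]
    exact hadj2
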